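/- Let U be a finite set with |U| = n, let ι be a finite index set, let N : ι → (subsets of U) with N(i) nonempty and |N(i)| ≤ σ₀⁴·n/8 for every i ∈ ι, let σ₀ be a real number with 0 < σ₀ ≤ 1 and σ₀·n ≥ 2, and let s be a natural number with s ≥ σ₀·n. Then there exists S ⊆ ι with |S| = s such that the sets N(i) for i ∈ S are pairwise disjoint and ⋃_{i∈S} N(i) = U, if and only if there exist at least 2^{σ₀·n}/4 distinct witness (σ₀²/4)-halves. -/

import Mathlib

open Finset

lemma sq_sum_powerset {ι : Type*} [DecidableEq ι] (S : Finset ι) (a : ι → ℝ) :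
    ∑ T ∈ S.powerset, (∑ i ∈ T, a i - (∑ i ∈ S, a i) / 2) ^ 2
      = 2 ^ S.card * (∑ i ∈ S, (a i) ^ 2) / 4 := by
  induction S using Finset.induction_on with
  | empty => simp
  | insert x s hx ih =>
    rw [Finset.sum_powerset_insert hx]
    have h1 : ∀ T ∈ s.powerset,
        (∑ i ∈ T, a i - (∑ i ∈ insert x s, a i) / 2) ^ 2
          = (∑ i ∈ T, a i - (∑ i ∈ s, a i) / 2) ^ 2
            - (a x) * (∑ i ∈ T, a i - (∑ i ∈ s, a i) / 2) + (a x)^2 / 4 := by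
      intro T _
      rw [Finset.sum_insert hx]; ring
    have h2 : ∀ T ∈ s.powerset,
        (∑ i ∈ insert x T, a i - (∑ i ∈ insert x s, a i) / 2) ^ 2
          = (∑ i ∈ T, a i - (∑ i ∈ s, a i) / 2) ^ 2
            + (a x) * (∑ i ∈ T, a i - (∑ i ∈ s, a i) / 2) + (a x)^2 / 4 := by
      intro T hT
      have hxT : x ∉ T := fun h => hx (Finset.mem_powerset.1 hT h)
      rw [Finset.sum_insert hx, Finset.sum_insert hxT]; ring
    rw [Finset.sum_congr rfl h1, Finset.sum_congr rfl h2]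
    simp only [Finset.sum_add_distrib, Finset.sum_sub_distrib, Finset.sum_const,
      Finset.card_powerset, ih, Finset.sum_insert hx, Finset.card_insert_of_notMem hx]
    ring

lemma pd_of_card {ι α : Type*} [DecidableEq ι] [DecidableEq α] (S : Finset ι) (N : ι → Finset α)
    (h : ∑ i ∈ S, (N i).card ≤ (S.biUnion N).card) : (S : Set ι).PairwiseDisjoint N := by
  induction S using Finset.induction_on with
  | empty => simp
  | insert x s hx ih =>
    rw [Finset.sum_insert hx, Finset.biUnion_insert] at h
    have hle : ((N x ∪ s.biUnion N).card : ℕ) ≤ (N x).card + (s.biUnion N).card :=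
      Finset.card_union_le _ _
    have hle2 : (s.biUnion N).card ≤ ∑ i ∈ s, (N i).card := Finset.card_biUnion_le
    have h1 : ∑ i ∈ s, (N i).card ≤ (s.biUnion N).card := by omega
    have h2 : (N x ∪ s.biUnion N).card = (N x).card + (s.biUnion N).card := by omega
    have hdisj : Disjoint (N x) (s.biUnion N) :=
      Finset.card_union_eq_card_add_card.1 h2
    rw [Finset.coe_insert]
    refine (Set.pairwiseDisjoint_insert_of_notMem (by simpa using hx)).2 ⟨ih h1, ?_⟩
    intro j hj
    exact hdisj.mono_right (Finset.subset_biUnion_of_mem N (by simpa using hj))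



/-- `W` is a witness `β`-halve for the Set Partition instance given by `N : ι → Finset α`
(universe `α`) and solution size `s`: its cardinality is within `β·n` of `n/2` and there
exist disjoint `S₁, S₂ ⊆ ι` with `N(S₁ ∪ S₂) = U`, `Σ_{i ∈ S₁∪S₂} |N(i)| = n`,
`N(S₁) = W`, `N(S₂) = U \ W`, and `|S₁| + |S₂| = s`. -/
def IsWitnessHalve {α ι : Type*} [Fintype α] [DecidableEq α] [DecidableEq ι]
    (N : ι → Finset α) (s : ℕ) (β : ℝ) (W : Finset α) : Prop :=
  (1/2 - β) * (Fintype.card α : ℝ) ≤ (W.card : ℝ) ∧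
  (W.card : ℝ) ≤ (1/2 + β) * (Fintype.card α : ℝ) ∧
  ∃ S₁ S₂ : Finset ι, Disjoint S₁ S₂ ∧
    (S₁ ∪ S₂).biUnion N = Finset.univ ∧
    (∑ i ∈ S₁ ∪ S₂, (N i).card) = Fintype.card α ∧
    S₁.biUnion N = W ∧
    S₂.biUnion N = Finset.univ \ W ∧
    S₁.card + S₂.card = s

open Finset in
theorem stmt_9 {α ι : Type*} [Fintype α] [DecidableEq α] [Fintype ι] [DecidableEq ι]
    (n : ℕ) (hn : Fintype.card α = n) (N : ι → Finset α) (σ₀ : ℝ) (s : ℕ)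
    (hne : ∀ i, (N i).Nonempty)
    (hsize : ∀ i, ((N i).card : ℝ) ≤ σ₀^4 * (n : ℝ) / 8)
    (hσ0 : 0 < σ₀) (hσ1 : σ₀ ≤ 1) (hσn : 2 ≤ σ₀ * (n : ℝ)) (hs : σ₀ * (n : ℝ) ≤ (s : ℝ)) :
    (∃ S : Finset ι, S.card = s ∧ (S : Set ι).PairwiseDisjoint N ∧
        S.biUnion N = Finset.univ) ↔
    (2 : ℝ) ^ (σ₀ * (n : ℝ)) / 4 ≤
      ({W : Finset α | IsWitnessHalve N s (σ₀^2/4) W}.ncard : ℝ) := by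
  classical
  have hnpos : (0:ℝ) < n := by nlinarith
  set β : ℝ := σ₀^2/4 with hβ
  have hβpos : 0 < β * n := by positivity
  constructor
  · rintro ⟨S, hScard, hpd, hSU⟩
    set a : ι → ℝ := fun i => ((N i).card : ℝ) with ha
    -- the sum of sizes over S is n
    have hdisjS : ∀ i ∈ S, ∀ j ∈ S, i ≠ j → Disjoint (N i) (N j) :=
      fun i hi j hj hij => hpd hi hj hij
    have hsumN : ∑ i ∈ S, (N i).card = n := by
      rw [← Finset.card_biUnion hdisjS, hSU, Finset.card_univ, hn]
    have hsumR : ∑ i ∈ S, a i = (n : ℝ) := by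
      rw [ha]; push_cast [← hsumN]; rfl
    -- good and bad subsets
    set G : Finset (Finset ι) :=
      S.powerset.filter (fun T => |(∑ i ∈ T, a i) - n/2| ≤ β*n) with hG
    set B : Finset (Finset ι) :=
      S.powerset.filter (fun T => ¬ |(∑ i ∈ T, a i) - n/2| ≤ β*n) with hB
    have hGB : G.card + B.card = 2^s := by
      rw [hG, hB, Finset.card_filter_add_card_filter_not, Finset.card_powerset, hScard]
    -- Chebyshev bound
    have htot : ∑ T ∈ S.powerset, ((∑ i ∈ T, a i) - n/2)^2
        = 2^s * (∑ i ∈ S, (a i)^2) / 4 := by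
      have := sq_sum_powerset S a
      rw [hsumR, hScard] at this
      exact this
    have hsqb : ∑ i ∈ S, (a i)^2 ≤ σ₀^4 * n / 8 * n := by
      calc ∑ i ∈ S, (a i)^2 ≤ ∑ i ∈ S, (σ₀^4 * n / 8) * a i := by
            refine Finset.sum_le_sum fun i _ => ?_
            have h1 : a i ≤ σ₀^4 * n / 8 := hsize i
            have h2 : 0 ≤ a i := Nat.cast_nonneg _
            nlinarith
        _ = σ₀^4 * n / 8 * n := by rw [← Finset.mul_sum, hsumR]
    have hBbound : (B.card : ℝ) * (β*n)^2 ≤ 2^s * (σ₀^4 * n / 8 * n) / 4 := by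
      have h1 : (B.card : ℝ) * (β*n)^2 ≤ ∑ T ∈ B, ((∑ i ∈ T, a i) - n/2)^2 := by
        have := Finset.card_nsmul_le_sum B (fun T => ((∑ i ∈ T, a i) - n/2)^2) ((β*n)^2)
          (fun T hT => by
            simp only [hB, Finset.mem_filter, not_le] at hT
            have h3 : (β*n)^2 ≤ |(∑ i ∈ T, a i) - n/2|^2 :=
              pow_le_pow_left₀ hβpos.le hT.2.le 2
            rwa [sq_abs] at h3)
        rwa [nsmul_eq_mul] at this
      have h2 : ∑ T ∈ B, ((∑ i ∈ T, a i) - n/2)^2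
          ≤ ∑ T ∈ S.powerset, ((∑ i ∈ T, a i) - n/2)^2 :=
        Finset.sum_le_sum_of_subset_of_nonneg (Finset.filter_subset _ _)
          (fun T _ _ => sq_nonneg _)
      have h4 : 2^s * (∑ i ∈ S, (a i)^2) / 4 ≤ 2^s * (σ₀^4 * n / 8 * n) / 4 := by
        have : (0:ℝ) < 2^s := by positivity
        nlinarith
      linarith [htot ▸ h2]
    -- hence B.card ≤ 2^s / 2 and G.card ≥ 2^s / 2
    have hβn2 : (β*n)^2 = σ₀^4 * n^2 / 16 := by rw [hβ]; ring
    have hBhalf : (B.card : ℝ) ≤ 2^s / 2 := by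
      have h2pos : (0:ℝ) < (β*n)^2 := by positivity
      rw [hβn2] at hBbound h2pos
      have h2s : (0:ℝ) < 2^s := by positivity
      nlinarith
    have hGhalf : (2:ℝ)^s / 2 ≤ G.card := by
      have : (G.card : ℝ) + B.card = 2^s := by exact_mod_cast hGB
      linarith
    -- injectivity of T ↦ T.biUnion N on subsets of S
    have hsubmono : ∀ T₁ T₂ : Finset ι, T₁ ⊆ S → T₂ ⊆ S →
        T₁.biUnion N ⊆ T₂.biUnion N → T₁ ⊆ T₂ := by
      intro T₁ T₂ h₁ h₂ hsub i hi
      obtain ⟨x, hx⟩ := hne i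
      have hx2 : x ∈ T₂.biUnion N := hsub (Finset.mem_biUnion.2 ⟨i, hi, hx⟩)
      obtain ⟨j, hj, hxj⟩ := Finset.mem_biUnion.1 hx2
      by_cases hij : i = j
      · rwa [hij]
      · exact absurd (Finset.disjoint_left.1 (hpd (h₁ hi) (h₂ hj) hij) hx) (by simp [hxj])
    have hinj : Set.InjOn (fun T : Finset ι => T.biUnion N) ↑G := by
      intro T₁ h₁ T₂ h₂ heq
      simp only [hG, Finset.coe_filter, Set.mem_setOf_eq, Finset.mem_powerset] at h₁ h₂
      exact Finset.Subset.antisymm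
        (hsubmono _ _ h₁.1 h₂.1 (le_of_eq heq))
        (hsubmono _ _ h₂.1 h₁.1 (le_of_eq heq.symm))
    -- the image consists of witness halves
    have himage : ∀ T ∈ G, IsWitnessHalve N s β (T.biUnion N) := by
      intro T hT
      simp only [hG, Finset.mem_filter, Finset.mem_powerset] at hT
      obtain ⟨hTS, hTbal⟩ := hT
      have hWcard : ((T.biUnion N).card : ℝ) = ∑ i ∈ T, a i := by
        rw [Finset.card_biUnion (fun i hi j hj hij => hdisjS i (hTS hi) j (hTS hj) hij)]
        push_cast; rfl
      have habs := abs_le.1 hTbal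
      refine ⟨?_, ?_, T, S \ T, Finset.disjoint_sdiff, ?_, ?_, rfl, ?_, ?_⟩
      · rw [hn, hWcard]; linarith [habs.1]
      · rw [hn, hWcard]; linarith [habs.2]
      · rw [Finset.union_sdiff_of_subset hTS, hSU]
      · rw [Finset.union_sdiff_of_subset hTS, hsumN, hn]
      · ext x
        simp only [Finset.mem_biUnion, Finset.mem_sdiff, Finset.mem_univ, true_and]
        constructor
        · rintro ⟨i, ⟨hiS, hiT⟩, hxi⟩
          rintro ⟨j, hj, hxj⟩
          have hij : i ≠ j := fun h => hiT (h ▸ hj)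
          exact Finset.disjoint_left.1 (hpd hiS (hTS hj) hij) hxi hxj
        · intro hxW
          have : x ∈ S.biUnion N := by rw [hSU]; exact Finset.mem_univ x
          obtain ⟨i, hiS, hxi⟩ := Finset.mem_biUnion.1 this
          exact ⟨i, ⟨hiS, fun hiT => hxW ⟨i, hiT, hxi⟩⟩, hxi⟩
      · rw [Finset.card_sdiff_of_subset hTS, hScard]
        have := Finset.card_le_card hTS
        omega
    -- conclude
    have hsub : ↑(G.image (fun T => T.biUnion N)) ⊆
        {W : Finset α | IsWitnessHalve N s β W} := by
      intro W hW
      simp only [Finset.coe_image, Set.mem_image, Finset.mem_coe] at hW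
      obtain ⟨T, hT, rfl⟩ := hW
      exact himage T hT
    have hfin : {W : Finset α | IsWitnessHalve N s β W}.Finite := Set.toFinite _
    have hle : (G.image (fun T => T.biUnion N)).card ≤
        {W : Finset α | IsWitnessHalve N s β W}.ncard := by
      rw [← Set.ncard_coe_finset]
      exact Set.ncard_le_ncard hsub hfin
    have hicard : (G.image (fun T => T.biUnion N)).card = G.card :=
      Finset.card_image_of_injOn hinj
    have h2s : (2:ℝ) ^ (σ₀ * n) ≤ (2:ℝ)^s := by
      rw [← Real.rpow_natCast 2 s]
      exact Real.rpow_le_rpow_of_exponent_le one_le_two hs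
    have : ((G.image (fun T => T.biUnion N)).card : ℝ) ≤
        ({W : Finset α | IsWitnessHalve N s β W}.ncard : ℝ) := by exact_mod_cast hle
    rw [hicard] at this
    calc (2:ℝ) ^ (σ₀ * n) / 4 ≤ (2:ℝ)^s / 2 := by linarith
      _ ≤ G.card := hGhalf
      _ ≤ _ := this
  · intro h
    have h4 : (4:ℝ) ≤ (2:ℝ) ^ (σ₀ * n) := by
      have := Real.rpow_le_rpow_of_exponent_le (x := (2:ℝ)) one_le_two hσn
      have h22 : (2:ℝ) ^ (2:ℝ) = 4 := by
        rw [show (2:ℝ) = ((2:ℕ):ℝ) by norm_num, Real.rpow_natCast]; norm_num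
      linarith [h22 ▸ this]
    have hne0 : {W : Finset α | IsWitnessHalve N s β W}.ncard ≠ 0 := by
      intro h0
      rw [h0] at h
      norm_num at h
      linarith
    obtain ⟨W, hW⟩ := Set.nonempty_of_ncard_ne_zero hne0
    obtain ⟨hb1, hb2, S₁, S₂, hd, hUu, hsum, h1, h2, hc⟩ := hW
    refine ⟨S₁ ∪ S₂, ?_, ?_, hUu⟩
    · rw [Finset.card_union_of_disjoint hd, hc]
    · apply pd_of_card
      rw [hsum, hUu, Finset.card_univ]
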